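/- Let (σ_n) be a sequence of positive reals with σ_n → 0, let H and H_{σ_n} be self-adjoint operators on a Hilbert space such that H_{σ_n} → H in the norm resolvent sense, let E_{σ_n} → E in ℝ with E = inf spec(H), and let Φ_{σ_n} be unit vectors with H_{σ_n}Φ_{σ_n} = E_{σ_n}Φ_{σ_n}. If Φ_{σ_n} converges weakly to some Φ ∈ H, then Φ ∈ dom(H) and HΦ = EΦ. -/

import Mathlib

open Filter

/-- Let `σ_n → 0⁺`, let `Hop`, `Hn n` be self-adjoint operators with `Hn n → Hop`
in the norm resolvent sense (witnessed here by the resolvents at `z = i`), let `E_n → E` in `ℝ`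
where `E = inf spec(Hop)` (expressed as the infimum of the quadratic form over unit vectors of
the domain), and let `Φ_n` be unit eigenvectors, `Hn n Φ_n = E_n Φ_n`.  If `Φ_n ⇀ Φ` weakly,
then `Φ ∈ dom Hop` and `Hop Φ = EΦ`. -/
theorem weak_limit_of_ground_states_is_eigenvector
    {H : Type*} [NormedAddCommGroup H] [InnerProductSpace ℂ H] [CompleteSpace H]
    (σ : ℕ → ℝ) (hσpos : ∀ n, 0 < σ n) (hσ0 : Tendsto σ atTop (nhds 0))
    (Hop : H →ₗ.[ℂ] H) (Hn : ℕ → H →ₗ.[ℂ] H)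
    (hHop : IsSelfAdjoint Hop) (hHn : ∀ n, IsSelfAdjoint (Hn n))
    (R : H →L[ℂ] H) (Rn : ℕ → H →L[ℂ] H)
    (hR : (∀ x : H, ∃ hx : R x ∈ Hop.domain, Hop ⟨R x, hx⟩ - Complex.I • R x = x) ∧
      (∀ y : Hop.domain, R (Hop y - Complex.I • (y : H)) = y))
    (hRn : ∀ n, (∀ x : H, ∃ hx : Rn n x ∈ (Hn n).domain,
        Hn n ⟨Rn n x, hx⟩ - Complex.I • Rn n x = x) ∧
      (∀ y : (Hn n).domain, Rn n (Hn n y - Complex.I • (y : H)) = y))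
    (hconv : Tendsto (fun n => ‖Rn n - R‖) atTop (nhds 0))
    (E : ℝ) (En : ℕ → ℝ)
    (hE : E = sInf {r : ℝ | ∃ Ψ : Hop.domain,
      ‖(Ψ : H)‖ = 1 ∧ (inner ℂ (Ψ : H) (Hop Ψ) : ℂ).re = r})
    (hEconv : Tendsto En atTop (nhds E))
    (Φn : ℕ → H) (hnorm : ∀ n, ‖Φn n‖ = 1)
    (heig : ∀ n, ∃ hdom : Φn n ∈ (Hn n).domain,
      Hn n ⟨Φn n, hdom⟩ = ((En n : ℂ)) • Φn n)
    (Φ : H)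
    (hweak : ∀ y : H, Tendsto (fun n => (inner ℂ y (Φn n) : ℂ)) atTop (nhds (inner ℂ y Φ))) :
    ∃ hdom : Φ ∈ Hop.domain, Hop ⟨Φ, hdom⟩ = (E : ℂ) • Φ := by
  classical
  -- basic nonvanishing
  have hz : ∀ r : ℝ, ((r : ℂ) - Complex.I) ≠ 0 := by
    intro r h
    have him : ((r : ℂ) - Complex.I).im = -1 := by simp
    rw [h] at him; simp at him
  -- Step 2: Rn n (Φn n) = ((En n : ℂ) - I)⁻¹ • Φn n
  have hRnΦ : ∀ n, Rn n (Φn n) = ((En n : ℂ) - Complex.I)⁻¹ • Φn n := by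
    intro n
    obtain ⟨hdom, heq⟩ := heig n
    have h1 : Rn n (Hn n ⟨Φn n, hdom⟩ - Complex.I • Φn n) = Φn n := (hRn n).2 ⟨Φn n, hdom⟩
    rw [heq] at h1
    have h2 : ((En n : ℂ)) • Φn n - Complex.I • Φn n = ((En n : ℂ) - Complex.I) • Φn n := by
      rw [sub_smul]
    rw [h2, map_smul] at h1
    calc Rn n (Φn n)
        = ((En n : ℂ) - Complex.I)⁻¹ • (((En n : ℂ) - Complex.I) • Rn n (Φn n)) := by
          rw [smul_smul, inv_mul_cancel₀ (hz (En n)), one_smul]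
      _ = ((En n : ℂ) - Complex.I)⁻¹ • Φn n := by rw [h1]
  -- Step 3: weak convergence of Rn n (Φn n) to R Φ
  have hweakR : ∀ y : H, Tendsto (fun n => (inner ℂ y (Rn n (Φn n)) : ℂ)) atTop
      (nhds (inner ℂ y (R Φ))) := by
    intro y
    have hdiff : Tendsto (fun n => (inner ℂ y ((Rn n - R) (Φn n)) : ℂ)) atTop (nhds 0) := by
      refine squeeze_zero_norm (a := fun n => ‖y‖ * ‖Rn n - R‖) (fun n => ?_) ?_
      · 
        calc ‖(inner ℂ y ((Rn n - R) (Φn n)) : ℂ)‖ ≤ ‖y‖ * ‖(Rn n - R) (Φn n)‖ :=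
              norm_inner_le_norm _ _
          _ ≤ ‖y‖ * (‖Rn n - R‖ * ‖Φn n‖) := by
              gcongr; exact (Rn n - R).le_opNorm _
          _ = ‖y‖ * ‖Rn n - R‖ := by rw [hnorm n, mul_one]
      · simpa using (tendsto_const_nhds (x := ‖y‖)).mul hconv
    have hRpart : Tendsto (fun n => (inner ℂ y (R (Φn n)) : ℂ)) atTop (nhds (inner ℂ y (R Φ))) := by
      have := hweak (ContinuousLinearMap.adjoint R y)
      simpa [ContinuousLinearMap.adjoint_inner_left] using this
    have := hdiff.add hRpart
    simpa [ContinuousLinearMap.sub_apply, inner_sub_right] using this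
  -- Step 4: identify R Φ
  have hcconv : Tendsto (fun n => ((En n : ℂ) - Complex.I)⁻¹) atTop
      (nhds (((E : ℂ) - Complex.I)⁻¹)) := by
    apply Tendsto.inv₀
    · exact ((Complex.continuous_ofReal.tendsto E).comp hEconv).sub tendsto_const_nhds
    · exact hz E
  have hRΦ : R Φ = ((E : ℂ) - Complex.I)⁻¹ • Φ := by
    apply ext_inner_left ℂ
    intro y
    have h1 : Tendsto (fun n => (inner ℂ y (Rn n (Φn n)) : ℂ)) atTop
        (nhds (((E : ℂ) - Complex.I)⁻¹ * inner ℂ y Φ)) := by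
      have := hcconv.mul (hweak y)
      simpa [hRnΦ, inner_smul_right] using this
    have := tendsto_nhds_unique (hweakR y) h1
    rw [this, inner_smul_right]
  -- Step 5: Φ ∈ domain
  obtain ⟨hx, hHx⟩ := hR.1 Φ
  have hΦeq : Φ = ((E : ℂ) - Complex.I) • R Φ := by
    rw [hRΦ, smul_smul, mul_inv_cancel₀ (hz E), one_smul]
  have hdom : Φ ∈ Hop.domain := by
    rw [hΦeq]; exact Hop.domain.smul_mem _ hx
  refine ⟨hdom, ?_⟩
  -- Step 6: compute Hop Φ
  have hsub : (⟨Φ, hdom⟩ : Hop.domain) = ((E : ℂ) - Complex.I) • ⟨R Φ, hx⟩ := by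
    apply Subtype.ext
    simpa using hΦeq
  have hHRΦ : Hop ⟨R Φ, hx⟩ = Φ + Complex.I • R Φ := by
    have := hHx
    linear_combination (norm := module) this
  rw [hsub, Hop.map_smul, hHRΦ]
  rw [hRΦ]
  rw [smul_add, smul_smul, smul_smul]
  rw [← add_smul]
  congr 1
  have h9 : ((E:ℂ) - Complex.I) * Complex.I * ((E:ℂ) - Complex.I)⁻¹ = Complex.I := by
    rw [mul_right_comm, mul_inv_cancel₀ (hz E), one_mul]
  rw [h9]
  ring
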